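/- If x ≡ y (words equivalent up to transposing adjacent commuting commands), then applying the state machine from the initial state yields the same response value at each occurrence: for every commanded occurrence c^i, τ*(s₀, x↾c^i).val = τ*(s₀, y↾c^i).val, where x↾c^i is the prefix of x up to and including the i-th occurrence of c. -/

import Mathlib

/-- Repeated application of the transition function `τ` over a command word,
returning the final state and the response value of the last command
(`nil` for the empty word). -/
def tauStar {S C V : Type*} (τ : S → C → S × V) (nil : V) : S → List C → S × V
  | s, [] => (s, nil)
  | s, [c] => τ s c
  | s, c :: w => tauStar τ nil (τ s c).1 w

/-- Commutation of two commands: transposing them yields the same state and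
leaves each command's response value unchanged, in every state. -/
def Commutes {S C V : Type*} (τ : S → C → S × V) (nil : V) (c d : C) : Prop :=
  ∀ s : S,
    (tauStar τ nil s [c, d]).1 = (tauStar τ nil s [d, c]).1 ∧
    (tauStar τ nil s [d, c]).2 = (tauStar τ nil s [c]).2 ∧
    (tauStar τ nil s [c, d]).2 = (tauStar τ nil s [d]).2

/-- One transposition of two adjacent commuting commands. -/
def SwapStep {C : Type*} (comm : C → C → Prop) (x y : List C) : Prop :=
  ∃ (z w : List C) (c d : C), comm c d ∧ x = z ++ c :: d :: w ∧ y = z ++ d :: c :: w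

/-- Equivalence of command words generated by transposing adjacent commuting
commands. -/
def WordEquiv {C : Type*} (comm : C → C → Prop) : List C → List C → Prop :=
  Relation.ReflTransGen (SwapStep comm)

/-- 1-based position of the k-th occurrence of `c` in a word, `0` if absent. -/
def pos {C : Type*} [DecidableEq C] (c : C) : ℕ → List C → ℕ
  | _, [] => 0
  | k, a :: l =>
    if a = c then
      if k ≤ 1 then (if k = 1 then 1 else 0)
      else match pos c (k - 1) l with
        | 0 => 0
        | p => p + 1
    else match pos c k l with
      | 0 => 0
      | p => p + 1

set_option linter.unusedSectionVars false

section Aux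
variable {S C V : Type*} [DecidableEq C] (τ : S → C → S × V) (nil : V)

lemma tauStar_cons (s : S) (a : C) (l : List C) (hl : l ≠ []) :
    tauStar τ nil s (a :: l) = tauStar τ nil (τ s a).1 l := by
  cases l with
  | nil => simp at hl
  | cons b t => rfl

lemma tauStar_append (s : S) (u v : List C) (hv : v ≠ []) :
    tauStar τ nil s (u ++ v) = tauStar τ nil (tauStar τ nil s u).1 v := by
  induction u generalizing s with
  | nil => rfl
  | cons a u ih =>
    rcases u with _ | ⟨b, t⟩
    · rw [List.cons_append, List.nil_append, tauStar_cons τ nil s a v hv]; rfl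
    · rw [List.cons_append, tauStar_cons τ nil s a _ (by simp), ih]; rfl

lemma pos_nil (c : C) (k : ℕ) : pos c k ([] : List C) = 0 := rfl

lemma pos_cons_self_one (c : C) (l : List C) : pos c 1 (c :: l) = 1 := by
  rw [pos, if_pos rfl, if_pos le_rfl, if_pos rfl]

lemma pos_cons_self_of_two_le (c : C) (k : ℕ) (hk : 2 ≤ k) (l : List C)
    (h : pos c (k - 1) l ≠ 0) : pos c k (c :: l) = pos c (k - 1) l + 1 := by
  rw [pos, if_pos rfl, if_neg (show ¬ k ≤ 1 by omega)]
  cases h' : pos c (k-1) l with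
  | zero => exact absurd h' h
  | succ p => rfl

lemma pos_cons_ne (a c : C) (hac : a ≠ c) (k : ℕ) (l : List C)
    (h : pos c k l ≠ 0) : pos c k (a :: l) = pos c k l + 1 := by
  rw [pos, if_neg hac]
  cases h' : pos c k l with
  | zero => exact absurd h' h
  | succ p => rfl

lemma pos_ne_zero (c : C) (k : ℕ) (l : List C) (h1 : 1 ≤ k) (h2 : k ≤ l.count c) :
    pos c k l ≠ 0 := by
  induction l generalizing k with
  | nil => simp at h2; omega
  | cons a l ih =>
    by_cases hac : a = c
    · subst hac
      rcases eq_or_lt_of_le h1 with h | h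
      · rw [← h, pos_cons_self_one]; simp
      · have h2' : k - 1 ≤ l.count a := by
          simp [List.count_cons] at h2; omega
        rw [pos_cons_self_of_two_le _ _ (by omega) _ (ih _ (by omega) h2')]
        simp
    · have h2' : k ≤ l.count c := by
        simpa [List.count_cons, hac] using h2
      rw [pos_cons_ne _ _ hac _ _ (ih _ h1 h2')]
      simp

lemma pos_le_length (c : C) (k : ℕ) (l : List C) : pos c k l ≤ l.length := by
  induction l generalizing k with
  | nil => simp [pos_nil]
  | cons a l ih =>
    rw [pos]
    split
    · split
      · split <;> simp
      · cases h' : pos c (k-1) l with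
        | zero => simp
        | succ p => simpa using (h' ▸ ih (k-1) : p + 1 ≤ l.length)
    · cases h' : pos c k l with
      | zero => simp
      | succ p => simpa using (h' ▸ ih k : p + 1 ≤ l.length)

lemma pos_append_of_le (c : C) (k : ℕ) (z u : List C) (h1 : 1 ≤ k) (h2 : k ≤ z.count c) :
    pos c k (z ++ u) = pos c k z := by
  induction z generalizing k with
  | nil => simp at h2; omega
  | cons a z ih =>
    by_cases hac : a = c
    · subst hac
      rcases eq_or_lt_of_le h1 with h | h
      · rw [← h]; rw [List.cons_append, pos_cons_self_one, pos_cons_self_one]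
      · have h2' : k - 1 ≤ z.count a := by simp [List.count_cons] at h2; omega
        rw [List.cons_append,
          pos_cons_self_of_two_le _ _ (by omega) _
            ((ih _ (by omega) h2') ▸ pos_ne_zero _ _ _ (by omega) h2'),
          pos_cons_self_of_two_le _ _ (by omega) _ (pos_ne_zero _ _ _ (by omega) h2'),
          ih _ (by omega) h2']
    · have h2' : k ≤ z.count c := by simpa [List.count_cons, hac] using h2
      rw [List.cons_append,
        pos_cons_ne _ _ hac _ _ ((ih _ h1 h2') ▸ pos_ne_zero _ _ _ h1 h2'),
        pos_cons_ne _ _ hac _ _ (pos_ne_zero _ _ _ h1 h2'), ih _ h1 h2']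

lemma pos_append_of_gt (c : C) (k : ℕ) (z u : List C) (h2 : z.count c < k)
    (hu : pos c (k - z.count c) u ≠ 0) :
    pos c k (z ++ u) = z.length + pos c (k - z.count c) u := by
  induction z generalizing k with
  | nil => simp
  | cons a z ih =>
    by_cases hac : a = c
    · subst hac
      have hzc : (a :: z).count a = z.count a + 1 := by simp
      have h2' : z.count a < k - 1 := by omega
      have hidx : (k - 1) - z.count a = k - (a :: z).count a := by omega
      have hu' : pos a ((k - 1) - z.count a) u ≠ 0 := by rw [hidx]; exact hu
      have hne : pos a (k - 1) (z ++ u) ≠ 0 := by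
        rw [ih _ h2' hu']; omega
      rw [List.cons_append, pos_cons_self_of_two_le _ _ (by omega) _ hne,
        ih _ h2' hu', ← hidx]
      simp; omega
    · have hzc : (a :: z).count c = z.count c := by simp [List.count_cons, hac]
      have h2' : z.count c < k := by omega
      have hidx : k - z.count c = k - (a :: z).count c := by omega
      have hu' : pos c (k - z.count c) u ≠ 0 := by rw [hidx]; exact hu
      have hne : pos c k (z ++ u) ≠ 0 := by rw [ih _ h2' hu']; omega
      rw [List.cons_append, pos_cons_ne _ _ hac _ _ hne, ih _ h2' hu', ← hidx]
      simp; omega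

lemma pair_value (c' d' : C) (hcd : Commutes τ nil c' d') (s : S) (t : List C)
    (ht : t ≠ []) :
    (tauStar τ nil s (c' :: d' :: t)).2 = (tauStar τ nil s (d' :: c' :: t)).2 := by
  have h1 := tauStar_append τ nil s [c', d'] t ht
  have h2 := tauStar_append τ nil s [d', c'] t ht
  simp only [List.cons_append, List.nil_append] at h1 h2
  rw [h1, h2, (hcd s).1]

lemma suffix_value (s : S) (w : List C) (c' d' : C) (hdd : c' ≠ d')
    (hcd : Commutes τ nil c' d') (c : C) (j : ℕ) (hj : 1 ≤ j)
    (hcnt : j ≤ (c' :: d' :: w).count c) :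
    (tauStar τ nil s ((c' :: d' :: w).take (pos c j (c' :: d' :: w)))).2 =
      (tauStar τ nil s ((d' :: c' :: w).take (pos c j (d' :: c' :: w)))).2 := by
  by_cases hc : c' = c
  · by_cases hd : d' = c
    · exact absurd (hc.trans hd.symm) hdd
    · subst hc
      rcases eq_or_lt_of_le hj with h1 | h2
      · -- j = 1
        rw [← h1, pos_cons_self_one,
          pos_cons_ne d' c' hd 1 (c' :: w) (by rw [pos_cons_self_one]; simp),
          pos_cons_self_one]
        show (tauStar τ nil s [c']).2 = (tauStar τ nil s [d', c']).2
        exact ((hcd s).2.1).symm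
      · -- j ≥ 2
        have hcc : (c' :: d' :: w).count c' = w.count c' + 1 := by
          simp [List.count_cons, hdd, Ne.symm hdd]
        have hw : j - 1 ≤ w.count c' := by omega
        have hpw : pos c' (j - 1) w ≠ 0 := pos_ne_zero c' _ w (by omega) hw
        have hd'w : pos c' (j - 1) (d' :: w) = pos c' (j - 1) w + 1 :=
          pos_cons_ne d' c' hd _ w hpw
        have hx : pos c' j (c' :: d' :: w) = pos c' (j - 1) w + 2 := by
          rw [pos_cons_self_of_two_le c' j (by omega) (d' :: w) (by rw [hd'w]; simp),
            hd'w]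
        have hc'w : pos c' j (c' :: w) = pos c' (j - 1) w + 1 :=
          pos_cons_self_of_two_le c' j (by omega) w hpw
        have hy : pos c' j (d' :: c' :: w) = pos c' (j - 1) w + 2 := by
          rw [pos_cons_ne d' c' hd j (c' :: w) (by rw [hc'w]; simp), hc'w]
        rw [hx, hy]
        have hlen : pos c' (j - 1) w ≤ w.length := pos_le_length c' _ w
        have ht : w.take (pos c' (j - 1) w) ≠ [] := by
          apply List.ne_nil_of_length_pos
          rw [List.length_take]; omega
        show (tauStar τ nil s (c' :: d' :: w.take (pos c' (j - 1) w))).2 =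
          (tauStar τ nil s (d' :: c' :: w.take (pos c' (j - 1) w))).2
        exact pair_value τ nil c' d' hcd s _ ht
  · by_cases hd : d' = c
    · subst hd
      rcases eq_or_lt_of_le hj with h1 | h2
      · -- j = 1
        rw [← h1,
          pos_cons_ne c' d' hc 1 (d' :: w) (by rw [pos_cons_self_one]; simp),
          pos_cons_self_one, pos_cons_self_one]
        show (tauStar τ nil s [c', d']).2 = (tauStar τ nil s [d']).2
        exact (hcd s).2.2
      · -- j ≥ 2
        have hcc : (c' :: d' :: w).count d' = w.count d' + 1 := by
          simp [List.count_cons, hc, Ne.symm hc]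
        have hw : j - 1 ≤ w.count d' := by omega
        have hpw : pos d' (j - 1) w ≠ 0 := pos_ne_zero d' _ w (by omega) hw
        have hd'w : pos d' j (d' :: w) = pos d' (j - 1) w + 1 :=
          pos_cons_self_of_two_le d' j (by omega) w hpw
        have hx : pos d' j (c' :: d' :: w) = pos d' (j - 1) w + 2 := by
          rw [pos_cons_ne c' d' hc j (d' :: w) (by rw [hd'w]; simp), hd'w]
        have hc'w : pos d' (j - 1) (c' :: w) = pos d' (j - 1) w + 1 :=
          pos_cons_ne c' d' hc _ w hpw
        have hy : pos d' j (d' :: c' :: w) = pos d' (j - 1) w + 2 := by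
          rw [pos_cons_self_of_two_le d' j (by omega) (c' :: w) (by rw [hc'w]; simp),
            hc'w]
        rw [hx, hy]
        have hlen : pos d' (j - 1) w ≤ w.length := pos_le_length d' _ w
        have ht : w.take (pos d' (j - 1) w) ≠ [] := by
          apply List.ne_nil_of_length_pos
          rw [List.length_take]; omega
        show (tauStar τ nil s (c' :: d' :: w.take (pos d' (j - 1) w))).2 =
          (tauStar τ nil s (d' :: c' :: w.take (pos d' (j - 1) w))).2
        exact pair_value τ nil c' d' hcd s _ ht
    · -- c ∉ {c', d'}
      have hcc : (c' :: d' :: w).count c = w.count c := by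
        simp [List.count_cons, hc, hd]
      have hw : j ≤ w.count c := by omega
      have hpw : pos c j w ≠ 0 := pos_ne_zero c j w hj hw
      have hd'w : pos c j (d' :: w) = pos c j w + 1 := pos_cons_ne d' c hd j w hpw
      have hc'w : pos c j (c' :: w) = pos c j w + 1 := pos_cons_ne c' c hc j w hpw
      have hx : pos c j (c' :: d' :: w) = pos c j w + 2 := by
        rw [pos_cons_ne c' c hc j (d' :: w) (by rw [hd'w]; simp), hd'w]
      have hy : pos c j (d' :: c' :: w) = pos c j w + 2 := by
        rw [pos_cons_ne d' c hd j (c' :: w) (by rw [hc'w]; simp), hc'w]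
      rw [hx, hy]
      have hlen : pos c j w ≤ w.length := pos_le_length c j w
      have ht : w.take (pos c j w) ≠ [] := by
        apply List.ne_nil_of_length_pos
        rw [List.length_take]; omega
      show (tauStar τ nil s (c' :: d' :: w.take (pos c j w))).2 =
        (tauStar τ nil s (d' :: c' :: w.take (pos c j w))).2
      exact pair_value τ nil c' d' hcd s _ ht

lemma swap_value (s₀ : S) (z w : List C) (c' d' : C)
    (hcd : Commutes τ nil c' d') (c : C) (i : ℕ) (hi : 1 ≤ i)
    (hix : i ≤ (z ++ c' :: d' :: w).count c) :
    (tauStar τ nil s₀ ((z ++ c' :: d' :: w).take (pos c i (z ++ c' :: d' :: w)))).2 =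
      (tauStar τ nil s₀ ((z ++ d' :: c' :: w).take (pos c i (z ++ d' :: c' :: w)))).2 := by
  by_cases hdd : c' = d'
  · subst hdd; rfl
  by_cases hA : i ≤ z.count c
  · rw [pos_append_of_le c i z _ hi hA, pos_append_of_le c i z _ hi hA,
      List.take_append_of_le_length (pos_le_length c i z),
      List.take_append_of_le_length (pos_le_length c i z)]
  · push_neg at hA
    have hcx : i ≤ z.count c + (c' :: d' :: w).count c := by
      rw [← List.count_append]; exact hix
    have hj1 : 1 ≤ i - z.count c := by omega
    have hcnt : i - z.count c ≤ (c' :: d' :: w).count c := by omega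
    have hcnt' : i - z.count c ≤ (d' :: c' :: w).count c := by
      have : (d' :: c' :: w).count c = (c' :: d' :: w).count c := by
        simp [List.count_cons]; omega
      omega
    have hx0 : pos c (i - z.count c) (c' :: d' :: w) ≠ 0 :=
      pos_ne_zero c _ _ hj1 hcnt
    have hy0 : pos c (i - z.count c) (d' :: c' :: w) ≠ 0 :=
      pos_ne_zero c _ _ hj1 hcnt'
    rw [pos_append_of_gt c i z _ hA hx0, pos_append_of_gt c i z _ hA hy0,
      List.take_append, List.take_append,
      List.take_of_length_le (Nat.le_add_right _ _), List.take_of_length_le (Nat.le_add_right _ _),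
      Nat.add_sub_cancel_left, Nat.add_sub_cancel_left]
    have hne1 : (c' :: d' :: w).take (pos c (i - z.count c) (c' :: d' :: w)) ≠ [] := by
      apply List.ne_nil_of_length_pos
      rw [List.length_take]
      have := pos_le_length c (i - z.count c) (c' :: d' :: w)
      simp only [List.length_cons]
      omega
    have hne2 : (d' :: c' :: w).take (pos c (i - z.count c) (d' :: c' :: w)) ≠ [] := by
      apply List.ne_nil_of_length_pos
      rw [List.length_take]
      have := pos_le_length c (i - z.count c) (d' :: c' :: w)
      simp only [List.length_cons]
      omega
    rw [tauStar_append τ nil s₀ z _ hne1, tauStar_append τ nil s₀ z _ hne2]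
    exact suffix_value τ nil _ w c' d' hdd hcd c _ hj1 hcnt

lemma swapStep_perm {comm : C → C → Prop} {x y : List C} (h : SwapStep comm x y) :
    x.Perm y := by
  obtain ⟨z, w, c, d, _, rfl, rfl⟩ := h
  exact List.Perm.append_left z (List.Perm.swap d c w)

end Aux

/-- if `x ≡ y` then every occurrence `c^i` yields the same
response value from the initial state, where `x.take (pos c i x)` is the
prefix of `x` up to and including the i-th occurrence of `c`. -/
theorem wordEquiv_value_eq {S C V : Type*} [DecidableEq C]
    (τ : S → C → S × V) (nil : V) (s₀ : S) (x y : List C)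
    (h : WordEquiv (Commutes τ nil) x y)
    (c : C) (i : ℕ) (hi : 1 ≤ i) (hix : i ≤ x.count c) :
    (tauStar τ nil s₀ (x.take (pos c i x))).2 =
      (tauStar τ nil s₀ (y.take (pos c i y))).2 := by
  revert hix
  induction h using Relation.ReflTransGen.head_induction_on with
  | refl => intro _; rfl
  | head hstep _ ih =>
    intro hix
    rename_i a b _
    have hperm := swapStep_perm hstep
    have hcb : i ≤ b.count c := by rw [← hperm.count_eq]; exact hix
    obtain ⟨z, w, c1, d1, hcomm, rfl, hbeq⟩ := hstep
    rw [swap_value τ nil s₀ z w c1 d1 hcomm c i hi hix, ← hbeq]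
    exact ih hcb
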